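/- Two increasing homeomorphisms of the real line (or of compact intervals onto themselves) with finitely many fixed points are topologically conjugate if and only if they have the same number of fixed points with the same sequence of stabilities (semi-attracting/semi-repelling from each side) or with the reversed sequence of stabilities. -/

import Mathlib

open Set Filter

namespace Stmt7

lemma mul_apply (a b : ℝ ≃o ℝ) (x : ℝ) : (a * b) x = a (b x) := rfl

lemma inv_apply (a : ℝ ≃o ℝ) (x : ℝ) : (a⁻¹) x = a.symm x := rfl

lemma one_apply (x : ℝ) : (1 : ℝ ≃o ℝ) x = x := rfl

lemma zpow_mul_zpow_apply (e : ℝ ≃o ℝ) (m n : ℤ) (x : ℝ) :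
    (e ^ m) ((e ^ n) x) = (e ^ (m + n)) x := by
  rw [zpow_add]; rfl

lemma pow_apply_iterate (e : ℝ ≃o ℝ) (n : ℕ) (x : ℝ) : (e ^ n) x = (⇑e)^[n] x := by
  induction n generalizing x with
  | zero => rfl
  | succ k ih =>
    rw [pow_succ', Function.iterate_succ_apply', mul_apply, ih]

lemma zpow_natCast_apply (e : ℝ ≃o ℝ) (n : ℕ) (x : ℝ) : (e ^ (n : ℤ)) x = (⇑e)^[n] x := by
  rw [zpow_natCast, pow_apply_iterate]

lemma zpow_neg_natCast_apply (e : ℝ ≃o ℝ) (n : ℕ) (x : ℝ) :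
    (e ^ (-(n : ℤ))) x = (⇑e.symm)^[n] x := by
  rw [zpow_neg, zpow_natCast, ← inv_pow]
  have : ⇑(e⁻¹) = ⇑e.symm := rfl
  rw [← this, pow_apply_iterate]

lemma zpow_succ_apply (e : ℝ ≃o ℝ) (n : ℤ) (x : ℝ) :
    (e ^ (n + 1)) x = e ((e ^ n) x) := by
  have h := zpow_mul_zpow_apply e 1 n x
  rw [zpow_one] at h
  rw [add_comm n 1, ← h]

lemma zpow_pred_apply (e : ℝ ≃o ℝ) (n : ℤ) (x : ℝ) :
    (e ^ (n - 1)) x = e.symm ((e ^ n) x) := by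
  apply e.injective
  rw [← zpow_succ_apply, sub_add_cancel, e.apply_symm_apply]

lemma zpow_mem (e : ℝ ≃o ℝ) {I : Set ℝ} (hf : ∀ x ∈ I, e x ∈ I)
    (hb : ∀ x ∈ I, e.symm x ∈ I) : ∀ (n : ℤ), ∀ x ∈ I, (e ^ n) x ∈ I := by
  intro n
  induction n using Int.induction_on with
  | zero => intro x hx; exact hx
  | succ k ih =>
    intro x hx
    rw [zpow_succ_apply]; exact hf _ (ih x hx)
  | pred k ih =>
    intro x hx
    rw [zpow_pred_apply]; exact hb _ (ih x hx)

lemma exists_le_iterate (e : ℝ ≃o ℝ) {I : Set ℝ} (hI : I.OrdConnected)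
    (hf : ∀ x ∈ I, e x ∈ I) (hgt : ∀ x ∈ I, x < e x)
    {x₀ x : ℝ} (hx₀ : x₀ ∈ I) (hx : x ∈ I) : ∃ n : ℕ, x ≤ (⇑e)^[n] x₀ := by
  by_contra hcon
  push_neg at hcon
  have hmemn : ∀ n : ℕ, (⇑e)^[n] x₀ ∈ I := by
    intro n
    induction n with
    | zero => exact hx₀
    | succ k ih => rw [Function.iterate_succ_apply']; exact hf _ ih
  have hmono : Monotone fun n : ℕ => (⇑e)^[n] x₀ :=
    monotone_nat_of_le_succ fun n => by
      rw [Function.iterate_succ_apply']; exact (hgt _ (hmemn n)).le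
  have hbdd : BddAbove (range fun n : ℕ => (⇑e)^[n] x₀) :=
    ⟨x, by rintro _ ⟨n, rfl⟩; exact (hcon n).le⟩
  set L := ⨆ n : ℕ, (⇑e)^[n] x₀ with hL
  have hlim : Tendsto (fun n : ℕ => (⇑e)^[n] x₀) atTop (nhds L) :=
    tendsto_atTop_ciSup hmono hbdd
  have hLx : L ≤ x := ciSup_le fun n => (hcon n).le
  have hx₀L : x₀ ≤ L := le_ciSup hbdd 0
  have hLI : L ∈ I := hI.out hx₀ hx ⟨hx₀L, hLx⟩
  have hlim2 : Tendsto (fun n : ℕ => (⇑e)^[n + 1] x₀) atTop (nhds L) :=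
    (tendsto_add_atTop_iff_nat 1).2 hlim
  have hlim3 : Tendsto (fun n : ℕ => (⇑e)^[n + 1] x₀) atTop (nhds (e L)) := by
    have := (e.continuous.tendsto L).comp hlim
    simpa [Function.comp_def, Function.iterate_succ_apply'] using this
  have heL : e L = L := tendsto_nhds_unique hlim3 hlim2
  exact absurd (hgt L hLI) (by rw [heL]; exact lt_irrefl L)

lemma exists_iterate_le (e : ℝ ≃o ℝ) {I : Set ℝ} (hI : I.OrdConnected)
    (hb : ∀ x ∈ I, e.symm x ∈ I) (hgt : ∀ x ∈ I, x < e x)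
    {x₀ x : ℝ} (hx₀ : x₀ ∈ I) (hx : x ∈ I) : ∃ n : ℕ, (⇑e.symm)^[n] x₀ ≤ x := by
  by_contra hcon
  push_neg at hcon
  have hmemn : ∀ n : ℕ, (⇑e.symm)^[n] x₀ ∈ I := by
    intro n
    induction n with
    | zero => exact hx₀
    | succ k ih => rw [Function.iterate_succ_apply']; exact hb _ ih
  have hlt : ∀ y ∈ I, e.symm y < y := by
    intro y hy
    have := hgt _ (hb y hy)
    simpa using this
  have hmono : Antitone fun n : ℕ => (⇑e.symm)^[n] x₀ :=
    antitone_nat_of_succ_le fun n => by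
      rw [Function.iterate_succ_apply']; exact (hlt _ (hmemn n)).le
  have hbdd : BddBelow (range fun n : ℕ => (⇑e.symm)^[n] x₀) :=
    ⟨x, by rintro _ ⟨n, rfl⟩; exact (hcon n).le⟩
  set L := ⨅ n : ℕ, (⇑e.symm)^[n] x₀ with hL
  have hlim : Tendsto (fun n : ℕ => (⇑e.symm)^[n] x₀) atTop (nhds L) :=
    tendsto_atTop_ciInf hmono hbdd
  have hLx : x ≤ L := le_ciInf fun n => (hcon n).le
  have hx₀L : L ≤ x₀ := ciInf_le hbdd 0
  have hLI : L ∈ I := hI.out hx hx₀ ⟨hLx, hx₀L⟩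
  have hlim2 : Tendsto (fun n : ℕ => (⇑e.symm)^[n + 1] x₀) atTop (nhds L) :=
    (tendsto_add_atTop_iff_nat 1).2 hlim
  have hlim3 : Tendsto (fun n : ℕ => (⇑e.symm)^[n + 1] x₀) atTop (nhds (e.symm L)) := by
    have := (e.symm.continuous.tendsto L).comp hlim
    simpa [Function.comp_def, Function.iterate_succ_apply'] using this
  have heL : e.symm L = L := tendsto_nhds_unique hlim3 hlim2
  exact absurd (hlt L hLI) (by rw [heL]; exact lt_irrefl L)

lemma exists_fund (e : ℝ ≃o ℝ) {I : Set ℝ} (hI : I.OrdConnected)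
    (hf : ∀ x ∈ I, e x ∈ I) (hb : ∀ x ∈ I, e.symm x ∈ I)
    (hgt : ∀ x ∈ I, x < e x) {x₀ : ℝ} (hx₀ : x₀ ∈ I) :
    ∀ x ∈ I, ∃ n : ℤ, (e ^ n) x₀ ≤ x ∧ x < (e ^ (n + 1)) x₀ := by
  intro x hx
  have hOmem : ∀ n : ℤ, (e ^ n) x₀ ∈ I := fun n => zpow_mem e hf hb n x₀ hx₀
  have hOsucc : ∀ n : ℤ, (e ^ (n + 1)) x₀ = e ((e ^ n) x₀) := fun n =>
    zpow_succ_apply e n x₀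
  have hOmono : StrictMono fun n : ℤ => (e ^ n) x₀ :=
    strictMono_int_of_lt_succ fun n => by
      rw [hOsucc]; exact hgt _ (hOmem n)
  obtain ⟨a, ha⟩ := exists_iterate_le e hI hb hgt hx₀ hx
  obtain ⟨b, hbb⟩ := exists_le_iterate e hI hf hgt hx₀ hx
  have ha' : (e ^ (-(a : ℤ))) x₀ ≤ x := by rw [zpow_neg_natCast_apply]; exact ha
  have hb' : x ≤ (e ^ (b : ℤ)) x₀ := by rw [zpow_natCast_apply]; exact hbb
  obtain ⟨n, hn1, hn2⟩ := Int.exists_greatest_of_bdd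
    (P := fun n : ℤ => (e ^ n) x₀ ≤ x)
    ⟨b, fun z hz => (hOmono.le_iff_le).1 (hz.trans hb')⟩ ⟨-(a : ℤ), ha'⟩
  refine ⟨n, hn1, ?_⟩
  by_contra hcon
  push_neg at hcon
  have := hn2 (n + 1) hcon
  omega

lemma apply_zpow_comm (e : ℝ ≃o ℝ) (m : ℤ) (x : ℝ) : (e ^ m) (e x) = e ((e ^ m) x) := by
  have h1 := zpow_mul_zpow_apply e m 1 x
  rw [zpow_one] at h1
  have h2 := zpow_mul_zpow_apply e 1 m x
  rw [zpow_one] at h2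
  rw [h1, h2, add_comm]

lemma local_conj (e e' : ℝ ≃o ℝ) (I J : Set ℝ) (hI : I.OrdConnected) (hJ : J.OrdConnected)
    (hIf : ∀ x ∈ I, e x ∈ I) (hIb : ∀ x ∈ I, e.symm x ∈ I)
    (hJf : ∀ y ∈ J, e' y ∈ J) (hJb : ∀ y ∈ J, e'.symm y ∈ J)
    (hgtI : ∀ x ∈ I, x < e x) (hgtJ : ∀ y ∈ J, y < e' y)
    (x₀ y₀ : ℝ) (hx₀ : x₀ ∈ I) (hy₀ : y₀ ∈ J) :
    ∃ h : ℝ → ℝ, StrictMonoOn h I ∧ (∀ x ∈ I, h x ∈ J) ∧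
      (∀ v ∈ J, ∃ u ∈ I, h u = v) ∧ (∀ x ∈ I, h (e x) = e' (h x)) := by
  classical
  set c := e x₀ with hc_def
  set c' := e' y₀ with hc'_def
  have hx₀c : x₀ < c := hgtI _ hx₀
  have hy₀c' : y₀ < c' := hgtJ _ hy₀
  have hcI : c ∈ I := hIf _ hx₀
  have hc'J : c' ∈ J := hJf _ hy₀
  -- orbits
  have hOmono : StrictMono fun n : ℤ => (e ^ n) x₀ :=
    strictMono_int_of_lt_succ fun n => by
      rw [zpow_succ_apply]; exact hgtI _ (zpow_mem e hIf hIb n x₀ hx₀)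
  have hO'mono : StrictMono fun n : ℤ => (e' ^ n) y₀ :=
    strictMono_int_of_lt_succ fun n => by
      rw [zpow_succ_apply]; exact hgtJ _ (zpow_mem e' hJf hJb n y₀ hy₀)
  have key : ∀ x ∈ I, ∃ n : ℤ, (e ^ n) x₀ ≤ x ∧ x < (e ^ (n + 1)) x₀ :=
    exists_fund e hI hIf hIb hgtI hx₀
  have key' : ∀ v ∈ J, ∃ m : ℤ, (e' ^ m) y₀ ≤ v ∧ v < (e' ^ (m + 1)) y₀ :=
    exists_fund e' hJ hJf hJb hgtJ hy₀
  -- affine fundamental map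
  set h0 : ℝ → ℝ := fun t => y₀ + (t - x₀) * ((c' - y₀) / (c - x₀)) with h0_def
  have hslope : 0 < (c' - y₀) / (c - x₀) :=
    div_pos (by linarith) (by linarith)
  have h0mono : StrictMono h0 := fun s t hst => by
    simp only [h0_def]
    have : s - x₀ < t - x₀ := by linarith
    nlinarith
  have h0x₀ : h0 x₀ = y₀ := by simp [h0_def]
  have hcx0 : c - x₀ ≠ 0 := sub_ne_zero.mpr (ne_of_gt hx₀c)
  have hcy0 : c' - y₀ ≠ 0 := sub_ne_zero.mpr (ne_of_gt hy₀c')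
  have h0c : h0 c = c' := by
    simp only [h0_def]
    rw [mul_comm, div_mul_cancel₀ _ hcx0]
    ring
  -- tau
  set τ : (x : ℝ) → x ∈ I → ℤ := fun x hx => Classical.choose (key x hx) with τ_def
  have hτ : ∀ (x : ℝ) (hx : x ∈ I),
      (e ^ τ x hx) x₀ ≤ x ∧ x < (e ^ (τ x hx + 1)) x₀ := fun x hx =>
    Classical.choose_spec (key x hx)
  have hτuniq : ∀ (x : ℝ) (hx : x ∈ I) (n : ℤ),
      (e ^ n) x₀ ≤ x → x < (e ^ (n + 1)) x₀ → τ x hx = n := by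
    intro x hx n h1 h2
    obtain ⟨h3, h4⟩ := hτ x hx
    have hn1 : τ x hx < n + 1 := hOmono.lt_iff_lt.1 (lt_of_le_of_lt h3 h2)
    have hn2 : n < τ x hx + 1 := hOmono.lt_iff_lt.1 (lt_of_le_of_lt h1 h4)
    omega
  set h : ℝ → ℝ := fun x => if hx : x ∈ I then
      (e' ^ τ x hx) (h0 ((e ^ (-τ x hx)) x)) else x with h_def
  have hval : ∀ (x : ℝ) (hx : x ∈ I), h x = (e' ^ τ x hx) (h0 ((e ^ (-τ x hx)) x)) :=
    fun x hx => dif_pos hx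
  -- fundamental domain bounds
  have hw : ∀ (x : ℝ) (hx : x ∈ I),
      x₀ ≤ (e ^ (-τ x hx)) x ∧ (e ^ (-τ x hx)) x < c := by
    intro x hx
    obtain ⟨h1, h2⟩ := hτ x hx
    set n := τ x hx
    constructor
    · have := (e ^ (-n)).strictMono.monotone h1
      rwa [zpow_mul_zpow_apply, neg_add_cancel, zpow_zero, one_apply] at this
    · have := (e ^ (-n)).strictMono h2
      rw [zpow_mul_zpow_apply] at this
      have hne : -n + (n + 1) = 1 := by ring
      rwa [hne, zpow_one] at this
  -- membership in J
  have hIcoJ : Ico y₀ c' ⊆ J := fun t ht => hJ.out hy₀ hc'J ⟨ht.1, ht.2.le⟩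
  have hh0w : ∀ (x : ℝ) (hx : x ∈ I), h0 ((e ^ (-τ x hx)) x) ∈ Ico y₀ c' := by
    intro x hx
    obtain ⟨h1, h2⟩ := hw x hx
    constructor
    · rw [← h0x₀]; exact h0mono.monotone h1
    · rw [← h0c]; exact h0mono h2
  have hmemJ : ∀ x ∈ I, h x ∈ J := by
    intro x hx
    rw [hval x hx]
    exact zpow_mem e' hJf hJb _ _ (hIcoJ (hh0w x hx))
  -- strict monotonicity
  have hmonoI : StrictMonoOn h I := by
    intro x hx y hy hxy
    rw [hval x hx, hval y hy]
    set n := τ x hx with hn_def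
    set m := τ y hy with hm_def
    have hnm : n ≤ m := by
      have h1 : (e ^ n) x₀ ≤ x := (hτ x hx).1
      have h2 : y < (e ^ (m + 1)) x₀ := (hτ y hy).2
      have : (e ^ n) x₀ < (e ^ (m + 1)) x₀ := lt_of_le_of_lt h1 (hxy.trans h2)
      have := hOmono.lt_iff_lt.1 this
      omega
    rcases eq_or_lt_of_le hnm with heq | hlt
    · rw [← heq]
      exact (e' ^ n).strictMono (h0mono ((e ^ (-n)).strictMono hxy))
    · have hxlt : (e' ^ n) (h0 ((e ^ (-n)) x)) < (e' ^ (n + 1)) y₀ := by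
        have : h0 ((e ^ (-n)) x) < c' := (hh0w x hx).2
        have h2 := (e' ^ n).strictMono this
        rw [hc'_def] at h2
        calc (e' ^ n) (h0 ((e ^ (-n)) x)) < (e' ^ n) (e' y₀) := h2
          _ = (e' ^ (n + 1)) y₀ := by rw [apply_zpow_comm, ← zpow_succ_apply]
      have hyge : (e' ^ m) y₀ ≤ (e' ^ m) (h0 ((e ^ (-m)) y)) := by
        have : y₀ ≤ h0 ((e ^ (-m)) y) := (hh0w y hy).1
        exact (e' ^ m).strictMono.monotone this
      have hmid : (e' ^ (n + 1)) y₀ ≤ (e' ^ m) y₀ :=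
        hO'mono.monotone (by omega)
      calc (e' ^ n) (h0 ((e ^ (-n)) x)) < (e' ^ (n + 1)) y₀ := hxlt
        _ ≤ (e' ^ m) y₀ := hmid
        _ ≤ (e' ^ m) (h0 ((e ^ (-m)) y)) := hyge
  -- surjectivity onto J
  have hIcoI : Ico x₀ c ⊆ I := fun t ht => hI.out hx₀ hcI ⟨ht.1, ht.2.le⟩
  have hsurj : ∀ v ∈ J, ∃ u ∈ I, h u = v := by
    intro v hv
    obtain ⟨m, hm1, hm2⟩ := key' v hv
    set h0inv : ℝ → ℝ := fun t => x₀ + (t - y₀) * ((c - x₀) / (c' - y₀)) with h0inv_def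
    have h0h0inv : ∀ t, h0 (h0inv t) = t := by
      intro t
      simp only [h0_def, h0inv_def]
      field_simp
      ring
    have hwv1 : y₀ ≤ (e' ^ (-m)) v := by
      have := (e' ^ (-m)).strictMono.monotone hm1
      rwa [zpow_mul_zpow_apply, neg_add_cancel, zpow_zero, one_apply] at this
    have hwv2 : (e' ^ (-m)) v < c' := by
      have := (e' ^ (-m)).strictMono hm2
      rw [zpow_mul_zpow_apply] at this
      have hne : -m + (m + 1) = 1 := by ring
      rwa [hne, zpow_one] at this
    set w := (e' ^ (-m)) v with w_def
    have hinvmono : Monotone h0inv := by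
      intro s t hst
      simp only [h0inv_def]
      have h1 : 0 ≤ (c - x₀) / (c' - y₀) := le_of_lt (div_pos (by linarith) (by linarith))
      nlinarith
    have hinvy₀ : h0inv y₀ = x₀ := by simp [h0inv_def]
    have hinvc' : h0inv c' = c := by
      simp only [h0inv_def]
      rw [mul_comm, div_mul_cancel₀ _ hcy0]
      ring
    have hu1 : x₀ ≤ h0inv w := by rw [← hinvy₀]; exact hinvmono hwv1
    have hu2 : h0inv w < c := by
      rw [← hinvc']
      simp only [h0inv_def]
      have h1 : 0 < (c - x₀) / (c' - y₀) := div_pos (by linarith) (by linarith)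
      nlinarith
    have huI0 : h0inv w ∈ I := hIcoI ⟨hu1, hu2⟩
    set u := (e ^ m) (h0inv w) with u_def
    have huI : u ∈ I := zpow_mem e hIf hIb m _ huI0
    have hτu : τ u huI = m := by
      refine hτuniq _ huI _ ?_ ?_
      · exact (e ^ m).strictMono.monotone hu1
      · have h2 := (e ^ m).strictMono hu2
        calc u < (e ^ m) c := h2
          _ = (e ^ (m + 1)) x₀ := by
            rw [zpow_succ_apply]
            exact apply_zpow_comm e m x₀

    refine ⟨u, huI, ?_⟩
    rw [hval u huI, hτu]
    have : (e ^ (-m)) u = h0inv w := by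
      rw [u_def, zpow_mul_zpow_apply, neg_add_cancel, zpow_zero, one_apply]
    rw [this, h0h0inv, w_def, zpow_mul_zpow_apply, add_neg_cancel, zpow_zero, one_apply]
  -- conjugacy
  have hconj : ∀ x ∈ I, h (e x) = e' (h x) := by
    intro x hx
    have hex : e x ∈ I := hIf x hx
    set n := τ x hx with hn_def
    have hτe : τ (e x) hex = n + 1 := by
      refine hτuniq _ hex _ ?_ ?_
      · rw [zpow_succ_apply]
        exact e.strictMono.monotone (hτ x hx).1
      · rw [zpow_succ_apply (e := e) (n := n + 1)]
        exact e.strictMono (hτ x hx).2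
    rw [hval (e x) hex, hval x hx, hτe]
    have harg : (e ^ (-(n + 1))) (e x) = (e ^ (-n)) x := by
      have h1 := zpow_mul_zpow_apply e (-(n + 1)) 1 x
      rw [zpow_one] at h1
      have h2 : -(n + 1) + 1 = -n := by ring
      rw [h1, h2]
    rw [harg, zpow_succ_apply]
  exact ⟨h, hmonoI, hmemJ, hsurj, hconj⟩

def cset (f : ℝ → ℝ) (x : ℝ) : Set ℝ := {y | ∀ t ∈ uIcc x y, f t ≠ t}

lemma cset_self {f : ℝ → ℝ} {x : ℝ} (hx : f x ≠ x) : x ∈ cset f x := by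
  intro t ht
  simp only [uIcc_self, mem_singleton_iff] at ht
  rw [ht]; exact hx

lemma cset_ne {f : ℝ → ℝ} {x y : ℝ} (hy : y ∈ cset f x) : f y ≠ y :=
  hy y right_mem_uIcc

lemma cset_base_ne {f : ℝ → ℝ} {x y : ℝ} (hy : y ∈ cset f x) : f x ≠ x :=
  hy x left_mem_uIcc

lemma cset_symm {f : ℝ → ℝ} {x y : ℝ} (hy : y ∈ cset f x) : x ∈ cset f y := by
  intro t ht
  exact hy t (by rwa [uIcc_comm])

lemma cset_trans {f : ℝ → ℝ} {x y z : ℝ} (hy : y ∈ cset f x) (hz : z ∈ cset f y) :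
    z ∈ cset f x := by
  intro t ht
  rcases uIcc_subset_uIcc_union_uIcc (b := y) ht with h | h
  · exact hy t h
  · exact hz t h

lemma cset_eq {f : ℝ → ℝ} {x y : ℝ} (hy : y ∈ cset f x) : cset f y = cset f x := by
  ext z
  exact ⟨fun hz => cset_trans hy hz, fun hz => cset_trans (cset_symm hy) hz⟩

lemma cset_ordConnected (f : ℝ → ℝ) (x : ℝ) : (cset f x).OrdConnected := by
  constructor
  intro y hy z hz t ht s hs
  rcases uIcc_subset_uIcc_union_uIcc (b := y) hs with h | h
  · exact hy s h
  · have htyz : t ∈ uIcc y z := Icc_subset_uIcc ht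
    have : uIcc y t ⊆ uIcc y z := uIcc_subset_uIcc left_mem_uIcc htyz
    rcases uIcc_subset_uIcc_union_uIcc (b := x) (this h) with h2 | h2
    · exact hy s (by rwa [uIcc_comm])
    · exact hz s h2

lemma cset_apply_mem {f : ℝ → ℝ} (hfm : StrictMono f) {x : ℝ} (hx : f x ≠ x) :
    f x ∈ cset f x := by
  intro t ht hft
  rcases lt_trichotomy x (f x) with h | h | h
  · rw [mem_uIcc] at ht
    rcases ht with ⟨h1, h2⟩ | ⟨h1, h2⟩
    · rcases eq_or_lt_of_le h1 with rfl | hlt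
      · exact hx hft
      · have := hfm hlt
        rw [hft] at this
        linarith
    · linarith
  · exact hx h.symm
  · rw [mem_uIcc] at ht
    rcases ht with ⟨h1, h2⟩ | ⟨h1, h2⟩
    · linarith
    · rcases eq_or_lt_of_le h2 with rfl | hlt
      · exact hx hft
      · have := hfm hlt
        rw [hft] at this
        linarith

lemma cset_preimage_mem {f : ℝ → ℝ} (hfm : StrictMono f) {x u : ℝ} (hx : f x ≠ x)
    (hu : f u = x) : u ∈ cset f x := by
  intro t ht hft
  rcases lt_trichotomy u x with h | h | h
  · rw [mem_uIcc] at ht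
    rcases ht with ⟨h1, h2⟩ | ⟨h1, h2⟩
    · linarith
    · rcases eq_or_lt_of_le h1 with rfl | hlt
      · rw [hft] at hu; linarith
      · have := hfm hlt
        rw [hft, hu] at this
        linarith
  · rw [h] at hu; exact hx hu
  · rw [mem_uIcc] at ht
    rcases ht with ⟨h1, h2⟩ | ⟨h1, h2⟩
    · rcases eq_or_lt_of_le h2 with heq | hlt
      · rw [← heq] at hu
        rw [hft] at hu
        linarith
      · have := hfm hlt
        rw [hft, hu] at this
        linarith
    · linarith

lemma cset_sign_pos {f : ℝ → ℝ} (hfc : Continuous f) {x : ℝ} (hx : x < f x) :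
    ∀ z ∈ cset f x, z < f z := by
  intro z hz
  have hne := cset_ne hz
  by_contra hcon
  push_neg at hcon
  have hlt : f z < z := lt_of_le_of_ne hcon hne
  have hcont : ContinuousOn (fun t => f t - t) (uIcc x z) :=
    (hfc.sub continuous_id).continuousOn
  have h0 : (0 : ℝ) ∈ uIcc (f x - x) (f z - z) := by
    rw [mem_uIcc]
    right
    constructor <;> linarith
  obtain ⟨t, ht, hφt⟩ := intermediate_value_uIcc hcont h0
  exact hz t ht (by dsimp at hφt; linarith)

lemma cset_sign_neg {f : ℝ → ℝ} (hfc : Continuous f) {x : ℝ} (hx : f x < x) :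
    ∀ z ∈ cset f x, f z < z := by
  intro z hz
  have hne := cset_ne hz
  by_contra hcon
  push_neg at hcon
  have hlt : z < f z := lt_of_le_of_ne hcon (fun hh => hne hh.symm)
  have hcont : ContinuousOn (fun t => f t - t) (uIcc x z) :=
    (hfc.sub continuous_id).continuousOn
  have h0 : (0 : ℝ) ∈ uIcc (f x - x) (f z - z) := by
    rw [mem_uIcc]
    left
    constructor <;> linarith
  obtain ⟨t, ht, hφt⟩ := intermediate_value_uIcc hcont h0
  exact hz t ht (by dsimp at hφt; linarith)

lemma cset_lt_of {f : ℝ → ℝ} {v y a : ℝ} (hv : v ∈ cset f y) (ha : f a = a)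
    (hya : y < a) : v < a := by
  by_contra hc
  push_neg at hc
  exact hv a (mem_uIcc.2 (Or.inl ⟨hya.le, hc⟩)) ha

lemma cset_gt_of {f : ℝ → ℝ} {v y a : ℝ} (hv : v ∈ cset f y) (ha : f a = a)
    (hay : a < y) : a < v := by
  by_contra hc
  push_neg at hc
  exact hv a (mem_uIcc.2 (Or.inr ⟨hc, hay.le⟩)) ha

lemma conj_of_mono (f g : ℝ → ℝ) (hfc : Continuous f) (hfm : StrictMono f)
    (hfb : Function.Bijective f) (hgc : Continuous g) (hgm : StrictMono g)
    (hgb : Function.Bijective g) (φ : ℝ → ℝ) (hφb : Function.Bijective φ)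
    (hφm : StrictMono φ) (h1 : ∀ x, x < f x ↔ φ x < g (φ x))
    (h2 : ∀ x, f x < x ↔ g (φ x) < φ x) :
    ∃ h : ℝ → ℝ, Continuous h ∧ Function.Bijective h ∧ ∀ x, h (f x) = g (h x) := by
  classical
  set e : ℝ ≃o ℝ := ⟨Equiv.ofBijective f hfb, hfm.le_iff_le⟩ with e_def
  set e' : ℝ ≃o ℝ := ⟨Equiv.ofBijective g hgb, hgm.le_iff_le⟩ with e'_def
  have he : ∀ x, e x = f x := fun _ => rfl
  have he' : ∀ y, e' y = g y := fun _ => rfl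
  have hesymm : ∀ x, f (e.symm x) = x := fun x => e.apply_symm_apply x
  have he'symm : ∀ y, g (e'.symm y) = y := fun y => e'.apply_symm_apply y
  -- fixed point transfer
  have hFG : ∀ x, f x = x ↔ g (φ x) = φ x := by
    intro x
    constructor
    · intro hx
      by_contra hg
      rcases lt_or_gt_of_ne hg with hlt | hgt
      · have := (h2 x).2 hlt
        rw [hx] at this
        exact lt_irrefl _ this
      · have := (h1 x).2 hgt
        rw [hx] at this
        exact lt_irrefl _ this
    · intro hg
      by_contra hf
      rcases lt_or_gt_of_ne hf with hlt | hgt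
      · have := (h2 x).1 hlt
        rw [hg] at this
        exact lt_irrefl _ this
      · have := (h1 x).1 hgt
        rw [hg] at this
        exact lt_irrefl _ this
  -- transport of components by φ
  have hφcset : ∀ x z, z ∈ cset f x → φ z ∈ cset g (φ x) := by
    intro x z hz t ht hgt
    obtain ⟨u, hu⟩ := hφb.2 t
    have hfu : f u = u := (hFG u).2 (by rw [hu]; exact hgt)
    rw [← hu] at ht
    rw [mem_uIcc] at ht
    have humem : u ∈ uIcc x z := by
      rw [mem_uIcc]
      rcases ht with ⟨hl, hr⟩ | ⟨hl, hr⟩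
      · exact Or.inl ⟨hφm.le_iff_le.1 hl, hφm.le_iff_le.1 hr⟩
      · exact Or.inr ⟨hφm.le_iff_le.1 hl, hφm.le_iff_le.1 hr⟩
    exact hz u humem hfu
  -- specification of local conjugations
  set spec : Set ℝ → (ℝ → ℝ) → Prop := fun S h =>
    StrictMonoOn h S ∧ (∀ x ∈ S, h x ∈ cset g (φ x)) ∧
    (∀ x ∈ S, ∀ v ∈ cset g (φ x), ∃ u ∈ S, h u = v) ∧
    (∀ x ∈ S, h (f x) = g (h x)) with spec_def
  have hexists : ∀ x, f x ≠ x → ∃ hh, spec (cset f x) hh := by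
    intro x hx
    have hgx : g (φ x) ≠ φ x := fun hh => hx ((hFG x).2 hh)
    have hIf : ∀ z ∈ cset f x, f z ∈ cset f x := by
      intro z hz
      have := cset_apply_mem hfm (cset_ne hz)
      rwa [cset_eq hz] at this
    have hIb : ∀ z ∈ cset f x, e.symm z ∈ cset f x := by
      intro z hz
      have := cset_preimage_mem hfm (cset_ne hz) (hesymm z)
      rwa [cset_eq hz] at this
    have hJf : ∀ z ∈ cset g (φ x), g z ∈ cset g (φ x) := by
      intro z hz
      have := cset_apply_mem hgm (cset_ne hz)
      rwa [cset_eq hz] at this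
    have hJb : ∀ z ∈ cset g (φ x), e'.symm z ∈ cset g (φ x) := by
      intro z hz
      have := cset_preimage_mem hgm (cset_ne hz) (he'symm z)
      rwa [cset_eq hz] at this
    rcases lt_or_gt_of_ne (fun hh : x = f x => hx hh.symm) with hpos | hneg
    · -- x < f x
      obtain ⟨h, hmono, hmem, hsurj, hconj⟩ :=
        local_conj e e' (cset f x) (cset g (φ x)) (cset_ordConnected f x)
          (cset_ordConnected g (φ x)) hIf hIb hJf hJb
          (fun z hz => cset_sign_pos hfc hpos z hz)
          (fun z hz => cset_sign_pos hgc ((h1 x).1 hpos) z hz)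
          x (φ x) (cset_self hx) (cset_self hgx)
      refine ⟨h, hmono, ?_, ?_, ?_⟩
      · intro z hz
        rw [cset_eq (hφcset x z hz)]
        exact hmem z hz
      · intro z hz v hv
        rw [cset_eq (hφcset x z hz)] at hv
        exact hsurj v hv
      · intro z hz
        exact hconj z hz
    · -- f x < x
      have hgneg : g (φ x) < φ x := (h2 x).1 hneg
      obtain ⟨h, hmono, hmem, hsurj, hconj⟩ :=
        local_conj e.symm e'.symm (cset f x) (cset g (φ x)) (cset_ordConnected f x)
          (cset_ordConnected g (φ x)) hIb (fun z hz => by rw [OrderIso.symm_symm]; exact hIf z hz) hJb (fun z hz => by rw [OrderIso.symm_symm]; exact hJf z hz)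
          (fun z hz => by
            have hz' : f z < z := cset_sign_neg hfc hneg z hz
            have := e.symm.strictMono hz'
            rwa [← he z, e.symm_apply_apply] at this)
          (fun z hz => by
            have hz' : g z < z := cset_sign_neg hgc hgneg z hz
            have := e'.symm.strictMono hz'
            rwa [← he' z, e'.symm_apply_apply] at this)
          x (φ x) (cset_self hx) (cset_self hgx)
      refine ⟨h, hmono, ?_, ?_, ?_⟩
      · intro z hz
        rw [cset_eq (hφcset x z hz)]
        exact hmem z hz
      · intro z hz v hv
        rw [cset_eq (hφcset x z hz)] at hv
        exact hsurj v hv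
      · intro z hz
        have hfz : f z ∈ cset f x := hIf z hz
        have hcz := hconj (f z) hfz
        have harg : e.symm (f z) = z := by rw [← he z, e.symm_apply_apply]
        rw [harg] at hcz
        have : e' (h z) = h (f z) := by
          rw [hcz]
          exact e'.apply_symm_apply _
        rw [← this, he']
  -- the global conjugation
  set locH : Set ℝ → ℝ → ℝ := fun S =>
    if hS : ∃ hh, spec S hh then Classical.choose hS else id with locH_def
  have hloc : ∀ (x : ℝ), f x ≠ x → spec (cset f x) (locH (cset f x)) := by
    intro x hx
    simp only [locH_def]
    rw [dif_pos (hexists x hx)]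
    exact Classical.choose_spec (hexists x hx)
  set H : ℝ → ℝ := fun x => if f x = x then φ x else locH (cset f x) x with H_def
  have hH_eq : ∀ x, f x = x → H x = φ x := fun x hx => by
    simp only [H_def]; rw [if_pos hx]
  have hH_ne : ∀ x, f x ≠ x → H x = locH (cset f x) x := fun x hx => by
    simp only [H_def]; rw [if_neg hx]
  have hHmem : ∀ x, f x ≠ x → H x ∈ cset g (φ x) := fun x hx => by
    rw [hH_ne x hx]
    exact (hloc x hx).2.1 x (cset_self hx)
  -- strict monotonicity
  have hHm : StrictMono H := by
    intro x y hxy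
    by_cases hx : f x = x <;> by_cases hy : f y = y
    · rw [hH_eq x hx, hH_eq y hy]
      exact hφm hxy
    · rw [hH_eq x hx]
      exact cset_gt_of (hHmem y hy) ((hFG x).1 hx) (hφm hxy)
    · rw [hH_eq y hy]
      exact cset_lt_of (hHmem x hx) ((hFG y).1 hy) (hφm hxy)
    · by_cases hsame : cset f x = cset f y
      · have hyx : y ∈ cset f x := by
          rw [hsame]; exact cset_self hy
        rw [hH_ne x hx, hH_ne y hy, ← hsame]
        exact (hloc x hx).1 (cset_self hx) hyx hxy
      · have hny : y ∉ cset f x := fun hmem => hsame (cset_eq hmem).symm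
        have : ∃ a ∈ uIcc x y, f a = a := by
          by_contra hcon
          push_neg at hcon
          exact hny hcon
        obtain ⟨a, ha, hfa⟩ := this
        have ha2 : g (φ a) = φ a := (hFG a).1 hfa
        rw [uIcc_of_le hxy.le] at ha
        have hxa : x < a := lt_of_le_of_ne ha.1 (fun hh => hx (hh ▸ hfa))
        have hay : a < y := lt_of_le_of_ne ha.2 (fun hh => hy (hh ▸ hfa))
        have l1 : H x < φ a := cset_lt_of (hHmem x hx) ha2 (hφm hxa)
        have l2 : φ a < H y := cset_gt_of (hHmem y hy) ha2 (hφm hay)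
        linarith
  -- surjectivity
  have hHsurj : Function.Surjective H := by
    intro v
    obtain ⟨u, hu⟩ := hφb.2 v
    by_cases hfu : f u = u
    · exact ⟨u, by rw [hH_eq u hfu, hu]⟩
    · have hv' : v ∈ cset g (φ u) := by
        rw [← hu]
        exact hφcset u u (cset_self hfu)
      obtain ⟨w, hw, hwv⟩ := (hloc u hfu).2.2.1 u (cset_self hfu) v hv'
      have hwne : f w ≠ w := cset_ne hw
      refine ⟨w, ?_⟩
      rw [hH_ne w hwne, cset_eq hw, hwv]
  -- conjugacy
  have hHconj : ∀ x, H (f x) = g (H x) := by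
    intro x
    by_cases hx : f x = x
    · rw [hx, hH_eq x hx]
      exact ((hFG x).1 hx).symm
    · have hfx' : f x ∈ cset f x := cset_apply_mem hfm hx
      have hfxne : f (f x) ≠ f x := cset_ne hfx'
      rw [hH_ne _ hfxne, hH_ne x hx, cset_eq hfx']
      exact (hloc x hx).2.2.2 x (cset_self hx)
  have hHbij : Function.Bijective H := ⟨hHm.injective, hHsurj⟩
  refine ⟨H, ?_, hHbij, hHconj⟩
  have : ⇑(StrictMono.orderIsoOfSurjective H hHm hHsurj) = H :=
    StrictMono.coe_orderIsoOfSurjective H hHm hHsurj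
  rw [← this]
  exact (StrictMono.orderIsoOfSurjective H hHm hHsurj).continuous

lemma conj_of_anti (f g : ℝ → ℝ) (hfc : Continuous f) (hfm : StrictMono f)
    (hfb : Function.Bijective f) (hgc : Continuous g) (hgm : StrictMono g)
    (hgb : Function.Bijective g) (φ : ℝ → ℝ) (hφb : Function.Bijective φ)
    (hφa : StrictAnti φ) (hs1 : ∀ x, x < f x ↔ g (φ x) < φ x)
    (hs2 : ∀ x, f x < x ↔ φ x < g (φ x)) :
    ∃ h : ℝ → ℝ, Continuous h ∧ Function.Bijective h ∧ ∀ x, h (f x) = g (h x) := by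
  set g' : ℝ → ℝ := fun y => -g (-y) with g'_def
  have hg'c : Continuous g' := (hgc.comp continuous_neg).neg
  have hg'm : StrictMono g' := fun a b hab => neg_lt_neg (hgm (neg_lt_neg hab))
  have hg'b : Function.Bijective g' := by
    constructor
    · intro a b hab
      simp only [g'_def] at hab
      exact neg_injective (hgb.1 (neg_injective hab))
    · intro v
      obtain ⟨w, hw⟩ := hgb.2 (-v)
      exact ⟨-w, by simp only [g'_def]; rw [neg_neg, hw, neg_neg]⟩
  set φ' : ℝ → ℝ := fun x => -φ x with φ'_def
  have hφ'm : StrictMono φ' := fun a b hab => neg_lt_neg (hφa hab)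
  have hφ'b : Function.Bijective φ' := by
    constructor
    · intro a b hab
      exact hφb.1 (neg_injective hab)
    · intro v
      obtain ⟨w, hw⟩ := hφb.2 (-v)
      exact ⟨w, by simp only [φ'_def]; rw [hw, neg_neg]⟩
  have hs1' : ∀ x, x < f x ↔ φ' x < g' (φ' x) := by
    intro x
    rw [hs1 x]
    simp only [φ'_def, g'_def, neg_neg]
    constructor <;> intro <;> linarith
  have hs2' : ∀ x, f x < x ↔ g' (φ' x) < φ' x := by
    intro x
    rw [hs2 x]
    simp only [φ'_def, g'_def, neg_neg]
    constructor <;> intro <;> linarith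
  obtain ⟨h', hc', hb', hconj'⟩ :=
    conj_of_mono f g' hfc hfm hfb hg'c hg'm hg'b φ' hφ'b hφ'm hs1' hs2'
  refine ⟨fun x => -h' x, hc'.neg, ?_, ?_⟩
  · exact neg_involutive.bijective.comp hb'
  · intro x
    show -h' (f x) = g (-h' x)
    rw [hconj' x]
    simp only [g'_def, neg_neg]

end Stmt7

open Set

/-- two increasing homeomorphisms of the real line with finitely many
fixed points are topologically conjugate iff they have the same number of fixed
points with the same sequence of stabilities, or with the reversed sequence.
"Same (resp. reversed) sequence of stabilities" is expressed by the existence of a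
strictly increasing (resp. strictly decreasing) bijection of the line matching the
sign of `f x − x` with the sign of `g y − y` (resp. the opposite sign), which in
particular matches the fixed points in order (resp. reversed order). -/
theorem stmt_7
    (f g : ℝ → ℝ)
    (hfc : Continuous f) (hfm : StrictMono f) (hfb : Function.Bijective f)
    (hgc : Continuous g) (hgm : StrictMono g) (hgb : Function.Bijective g)
    (hffin : {x : ℝ | f x = x}.Finite) (hgfin : {x : ℝ | g x = x}.Finite) :
    (∃ h : ℝ → ℝ, Continuous h ∧ Function.Bijective h ∧ ∀ x, h (f x) = g (h x)) ↔
    (∃ φ : ℝ → ℝ, Function.Bijective φ ∧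
      ((StrictMono φ ∧ (∀ x, x < f x ↔ φ x < g (φ x)) ∧ (∀ x, f x < x ↔ g (φ x) < φ x)) ∨
       (StrictAnti φ ∧ (∀ x, x < f x ↔ g (φ x) < φ x) ∧ (∀ x, f x < x ↔ φ x < g (φ x))))) := by
  constructor
  · rintro ⟨h, hc, hb, hconj⟩
    rcases hc.strictMono_of_inj hb.1 with hm | ha
    · refine ⟨h, hb, Or.inl ⟨hm, ?_, ?_⟩⟩
      · intro x
        rw [← hconj x]
        exact hm.lt_iff_lt.symm
      · intro x
        rw [← hconj x]
        exact hm.lt_iff_lt.symm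
    · refine ⟨h, hb, Or.inr ⟨ha, ?_, ?_⟩⟩
      · intro x
        rw [← hconj x]
        exact ha.lt_iff_gt.symm
      · intro x
        rw [← hconj x]
        exact ha.lt_iff_gt.symm
  · rintro ⟨φ, hφb, ⟨hφm, hs1, hs2⟩ | ⟨hφa, hs1, hs2⟩⟩
    · exact Stmt7.conj_of_mono f g hfc hfm hfb hgc hgm hgb φ hφb hφm hs1 hs2
    · exact Stmt7.conj_of_anti f g hfc hfm hfb hgc hgm hgb φ hφb hφa hs1 hs2
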